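/- Let D(G) be the determinant of the 4×4 matrix with rows (1-G⁴, G⁴, -G⁴, -G⁴), (1+G³, 1-2G³, 3G³, 4G³), (0, 1+G², 1-3G², -6G²), (0, 0, 1+G, 4G-1). Then D(0) < 0 and D(1) < 0, and D has exactly two roots in (0,1): one G₁ ∈ (0.178, 0.179) and one G₂ ∈ (0.706, 0.707). -/

import Mathlib

open Set Matrix

/-- The determinant of the matching matrix of system (S). -/
noncomputable def Dmat (G : ℝ) : ℝ :=
  Matrix.det !![1 - G ^ 4, G ^ 4, -G ^ 4, -G ^ 4;
    1 + G ^ 3, 1 - 2 * G ^ 3, 3 * G ^ 3, 4 * G ^ 3;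
    0, 1 + G ^ 2, 1 - 3 * G ^ 2, -6 * G ^ 2;
    0, 0, 1 + G, 4 * G - 1]

/-- The degree-8 cofactor of `-(G+1)^2` in `Dmat`. -/
noncomputable def Rf (G : ℝ) : ℝ :=
  G^8 - 6*G^7 + 2*G^6 - G^5 + 12*G^4 - G^3 + 2*G^2 - 6*G + 1

lemma Dmat_eq (G : ℝ) : Dmat G = -(G+1)^2 * Rf G := by
  simp [Dmat, Rf, Matrix.det_succ_row_zero, Fin.sum_univ_succ, Fin.succAbove]
  ring

lemma Rf_deriv (x : ℝ) :
    HasDerivAt Rf (8*x^7 - 42*x^6 + 12*x^5 - 5*x^4 + 48*x^3 - 3*x^2 + 4*x - 6) x := by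
  have h := ((((((((hasDerivAt_pow 8 x).sub ((hasDerivAt_pow 7 x).const_mul 6)).add
    ((hasDerivAt_pow 6 x).const_mul 2)).sub (hasDerivAt_pow 5 x)).add
    ((hasDerivAt_pow 4 x).const_mul 12)).sub (hasDerivAt_pow 3 x)).add
    ((hasDerivAt_pow 2 x).const_mul 2)).sub ((hasDerivAt_id x).const_mul 6)).add_const 1
  convert h using 1
  all_goals first
    | rfl
    | (funext y; simp only [Rf, Pi.add_apply, Pi.sub_apply, id]; ring)
    | (norm_num; ring)

lemma Rf_cont : Continuous Rf := by
  unfold Rf; fun_prop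

lemma derivA (x : ℝ) (h0 : 0 ≤ x) (h1 : x ≤ 0.45) :
    8*x^7 - 42*x^6 + 12*x^5 - 5*x^4 + 48*x^3 - 3*x^2 + 4*x - 6 < 0 := by
  nlinarith [sq_nonneg x, sq_nonneg (x-0.45), pow_le_pow_left₀ h0 h1 2, pow_le_pow_left₀ h0 h1 3,
    pow_le_pow_left₀ h0 h1 5, pow_le_pow_left₀ h0 h1 7, mul_nonneg h0 h0,
    mul_nonneg (mul_nonneg h0 h0) h0, sq_nonneg (x^3), sq_nonneg (x^2-x)]

lemma midB (x : ℝ) (h0 : 0.45 ≤ x) (h1 : x ≤ 0.5) : Rf x < 0 := by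
  unfold Rf
  nlinarith [sq_nonneg (x-0.45), sq_nonneg (x-0.5), sq_nonneg x,
    mul_nonneg (sub_nonneg.2 h0) (sub_nonneg.2 h1), sq_nonneg (x^2), sq_nonneg (x^3),
    sq_nonneg (x^4)]

lemma derivC (x : ℝ) (h0 : 0.5 ≤ x) (h1 : x ≤ 1) :
    0 < 8*x^7 - 42*x^6 + 12*x^5 - 5*x^4 + 48*x^3 - 3*x^2 + 4*x - 6 := by
  nlinarith [sq_nonneg (x-0.5), sq_nonneg (x-1), sq_nonneg (x-0.7),
    mul_nonneg (sub_nonneg.2 h0) (sub_nonneg.2 h1), sq_nonneg (x^2-x), sq_nonneg (x^3-x^2)]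

lemma Rf_anti : StrictAntiOn Rf (Icc (0:ℝ) 0.45) := by
  apply strictAntiOn_of_deriv_neg (convex_Icc _ _) Rf_cont.continuousOn
  intro x hx
  rw [interior_Icc] at hx
  rw [(Rf_deriv x).deriv]
  exact derivA x hx.1.le hx.2.le

lemma Rf_mono : StrictMonoOn Rf (Icc (0.5:ℝ) 1) := by
  apply strictMonoOn_of_deriv_pos (convex_Icc _ _) Rf_cont.continuousOn
  intro x hx
  rw [interior_Icc] at hx
  rw [(Rf_deriv x).deriv]
  exact derivC x hx.1.le hx.2.le

/-- `D(0) < 0`, `D(1) < 0`, and `D` has exactly two roots in `(0,1)`: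
`G₁ ∈ (0.178, 0.179)` and `G₂ ∈ (0.706, 0.707)`. -/
theorem stmt15 :
    Dmat 0 < 0 ∧ Dmat 1 < 0 ∧
    ∃ G₁ ∈ Ioo (0.178 : ℝ) 0.179, ∃ G₂ ∈ Ioo (0.706 : ℝ) 0.707,
      Dmat G₁ = 0 ∧ Dmat G₂ = 0 ∧
      ∀ G ∈ Ioo (0 : ℝ) 1, Dmat G = 0 → G = G₁ ∨ G = G₂ := by
  have e178 : Rf 0.178 > 0 := by unfold Rf; norm_num
  have e179 : Rf 0.179 < 0 := by unfold Rf; norm_num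
  have e706 : Rf 0.706 < 0 := by unfold Rf; norm_num
  have e707 : Rf 0.707 > 0 := by unfold Rf; norm_num
  -- existence of G₁
  obtain ⟨G₁, hG₁mem, hG₁⟩ :
      ∃ G₁ ∈ Ioo (0.178:ℝ) 0.179, Rf G₁ = 0 := by
    have h := intermediate_value_Ioo' (by norm_num : (0.178:ℝ) ≤ 0.179)
      Rf_cont.continuousOn (a := 0.178) (b := 0.179)
    obtain ⟨x, hx, hfx⟩ := h ⟨e179, e178⟩
    exact ⟨x, hx, hfx⟩
  obtain ⟨G₂, hG₂mem, hG₂⟩ :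
      ∃ G₂ ∈ Ioo (0.706:ℝ) 0.707, Rf G₂ = 0 := by
    have h := intermediate_value_Ioo (by norm_num : (0.706:ℝ) ≤ 0.707)
      Rf_cont.continuousOn (a := 0.706) (b := 0.707)
    obtain ⟨x, hx, hfx⟩ := h ⟨e706, e707⟩
    exact ⟨x, hx, hfx⟩
  refine ⟨?_, ?_, G₁, hG₁mem, G₂, hG₂mem, ?_, ?_, ?_⟩
  · rw [Dmat_eq]; unfold Rf; norm_num
  · rw [Dmat_eq]; unfold Rf; norm_num
  · rw [Dmat_eq, hG₁]; ring
  · rw [Dmat_eq, hG₂]; ring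
  · intro G hG hD
    have hRG : Rf G = 0 := by
      rw [Dmat_eq] at hD
      rcases mul_eq_zero.1 hD with h | h
      · exfalso; nlinarith [hG.1]
      · exact h
    rcases le_or_gt G 0.45 with hc1 | hc1
    · left
      have hGm : G ∈ Icc (0:ℝ) 0.45 := ⟨hG.1.le, hc1⟩
      have hG₁m : G₁ ∈ Icc (0:ℝ) 0.45 := ⟨by linarith [hG₁mem.1], by linarith [hG₁mem.2]⟩
      exact Rf_anti.injOn hGm hG₁m (by rw [hRG, hG₁])
    · rcases le_or_gt G 0.5 with hc2 | hc2
      · exact absurd hRG (ne_of_lt (midB G hc1.le hc2))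
      · right
        have hGm : G ∈ Icc (0.5:ℝ) 1 := ⟨hc2.le, hG.2.le⟩
        have hG₂m : G₂ ∈ Icc (0.5:ℝ) 1 := ⟨by linarith [hG₂mem.1], by linarith [hG₂mem.2]⟩
        exact Rf_mono.injOn hGm hG₂m (by rw [hRG, hG₂])
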